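/- Let A and B be complex N×N matrices. Then the cube of the Lévy distance between the empirical distributions of singular values of A and B is at most (1/N)‖A − B‖²_{HS}: D(L_{√(AA*)}, L_{√(BB*)})³ ≤ (1/N) ‖A−B‖²_{HS}. -/

import Mathlib

open Matrix

/-- The singular values of a complex `N × N` matrix: the square roots of the eigenvalues of
`A Aᴴ`. -/
noncomputable def singVals {N : ℕ} (A : Matrix (Fin N) (Fin N) ℂ) : Fin N → ℝ :=
  fun i => Real.sqrt ((Matrix.isHermitian_mul_conjTranspose_self A).eigenvalues i)

/-- The cumulative distribution function of the empirical distribution of the values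
`σ 0, …, σ (N-1)`. -/
noncomputable def empCdf {N : ℕ} (σ : Fin N → ℝ) (x : ℝ) : ℝ :=
  ((Finset.univ.filter fun i => σ i < x).card : ℝ) / N

/-- The Lévy distance between two distribution functions. -/
noncomputable def levyDist (F G : ℝ → ℝ) : ℝ :=
  sInf {ε : ℝ | 0 < ε ∧ ∀ x : ℝ, F (x - ε) - ε ≤ G x ∧ G x ≤ F (x + ε) + ε}

namespace LHW

open Finset

noncomputable def gfun {N : ℕ} (mu : Fin N → ℝ) (j : Fin N) : ℝ :=
  if mu j = 0 then 0 else (Real.sqrt (mu j))⁻¹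

lemma gfun_nonneg {N : ℕ} (mu : Fin N → ℝ) (j : Fin N) : 0 ≤ gfun mu j := by
  unfold gfun; split <;> positivity

lemma mul_star_self (z : ℂ) : z * star z = ((‖z‖^2 : ℝ) : ℂ) := by
  rw [Complex.star_def, Complex.mul_conj]
  norm_cast
  rw [Complex.normSq_eq_norm_sq]

-- diagonal entries of X * Yᴴ at (i,i) when X = Y
lemma diag_self {N : ℕ} (X : Matrix (Fin N) (Fin N) ℂ) (i : Fin N) :
    (X * Xᴴ) i i = ((∑ k, ‖X i k‖^2 : ℝ) : ℂ) := by
  simp only [Matrix.mul_apply, Matrix.conjTranspose_apply]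
  rw [Complex.ofReal_sum]
  exact Finset.sum_congr rfl fun k _ => mul_star_self (X i k)

lemma bessel {N : ℕ} (M P : Matrix (Fin N) (Fin N) ℂ) (lam mu : Fin N → ℝ)
    (hM : M * Mᴴ = Matrix.diagonal (fun i => (lam i : ℂ)))
    (hP : P * Pᴴ = Matrix.diagonal (fun j => (mu j : ℂ)))
    (i : Fin N) :
    ∑ j, ‖(M * Pᴴ) i j‖ ^ 2 * (gfun mu j) ^ 2 ≤ lam i := by
  classical
  have hmu : ∀ j, mu j = ∑ k, ‖P j k‖^2 := by
    intro j
    have := congrFun (congrFun hP j) j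
    rw [diag_self, Matrix.diagonal_apply_eq] at this
    exact_mod_cast this.symm
  have hmunn : ∀ j, 0 ≤ mu j := fun j => (hmu j) ▸ Finset.sum_nonneg fun k _ => sq_nonneg _
  have hProw : ∀ j, mu j = 0 → ∀ k, P j k = 0 := by
    intro j hj k
    have h : ∑ k, ‖P j k‖^2 = 0 := by rw [← hmu j]; exact hj
    have := (Finset.sum_eq_zero_iff_of_nonneg (fun k _ => sq_nonneg ‖P j k‖)).mp h k
      (Finset.mem_univ k)
    simpa [pow_eq_zero_iff] using this
  set g : Fin N → ℝ := gfun mu with hg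
  set Q : Matrix (Fin N) (Fin N) ℂ := Matrix.diagonal (fun j => (g j : ℂ)) * P with hQ
  have hstarg : (star fun j => (g j : ℂ)) = fun j => (g j : ℂ) := by
    funext j; simp [Pi.star_apply, Complex.star_def, Complex.conj_ofReal]
  have hQH : Qᴴ = Pᴴ * Matrix.diagonal (fun j => (g j : ℂ)) := by
    rw [hQ, Matrix.conjTranspose_mul, Matrix.diagonal_conjTranspose, hstarg]
  have hQQ : Q * Qᴴ = Matrix.diagonal (fun j => (if mu j = 0 then (0:ℂ) else 1)) := by
    rw [hQ, hQH, Matrix.mul_assoc, ← Matrix.mul_assoc P, hP,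
      Matrix.diagonal_mul_diagonal, Matrix.diagonal_mul_diagonal]
    apply congrArg Matrix.diagonal
    funext j
    by_cases hj : mu j = 0
    · simp [hg, gfun, hj]
    · have h1 : g j = (Real.sqrt (mu j))⁻¹ := by rw [hg]; unfold gfun; rw [if_neg hj]
      rw [if_neg hj, h1]
      have h2 : Real.sqrt (mu j) ≠ 0 := by
        rw [Real.sqrt_ne_zero']
        exact lt_of_le_of_ne (hmunn j) (Ne.symm hj)
      norm_cast
      rw [show (Real.sqrt (mu j))⁻¹ * (mu j * (Real.sqrt (mu j))⁻¹) = 1 by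
        rw [← Real.mul_self_sqrt (hmunn j)]
        field_simp
        rw [Real.sqrt_sq (Real.sqrt_nonneg _)]]
  -- diagonal e * Q = Q
  have hdQ : Matrix.diagonal (fun j => (if mu j = 0 then (0:ℂ) else 1)) * Q = Q := by
    apply Matrix.ext; intro j k
    rw [Matrix.diagonal_mul]
    by_cases hj : mu j = 0
    · rw [if_pos hj]
      have : Q j k = 0 := by
        rw [hQ, Matrix.diagonal_mul]
        rw [show g j = 0 by rw [hg]; unfold gfun; rw [if_pos hj]]
        simp
      rw [this]; simp
    · rw [if_neg hj, one_mul]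
  set R : Matrix (Fin N) (Fin N) ℂ := Qᴴ * Q with hR
  have hRH : Rᴴ = R := by rw [hR, Matrix.conjTranspose_mul, Matrix.conjTranspose_conjTranspose]
  have hRR : R * R = R := by
    rw [hR, Matrix.mul_assoc, ← Matrix.mul_assoc Q, hQQ, hdQ]
  -- (M - M*R)(M - M*R)ᴴ = M*Mᴴ - M*R*Mᴴ
  have hZ : (M - M * R) * (M - M * R)ᴴ = M * Mᴴ - M * R * Mᴴ := by
    rw [Matrix.conjTranspose_sub, Matrix.conjTranspose_mul, hRH]
    rw [Matrix.sub_mul, Matrix.mul_sub, Matrix.mul_sub]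
    have : M * R * (R * Mᴴ) = M * R * Mᴴ := by
      rw [Matrix.mul_assoc M R, ← Matrix.mul_assoc R R, hRR, ← Matrix.mul_assoc]
    rw [this]
    rw [← Matrix.mul_assoc M R Mᴴ]
    abel
  -- real part inequality
  have hineq : ((M * R * Mᴴ) i i).re ≤ ((M * Mᴴ) i i).re := by
    have h1 : (M * Mᴴ) i i - (M * R * Mᴴ) i i = ((M - M * R) * (M - M * R)ᴴ) i i := by
      rw [hZ]; simp [Matrix.sub_apply]
    have h2 : 0 ≤ (((M - M * R) * (M - M * R)ᴴ) i i).re := by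
      rw [diag_self]
      norm_cast
      exact Finset.sum_nonneg fun k _ => sq_nonneg _
    have := congrArg Complex.re h1
    simp only [Complex.sub_re] at this
    linarith
  -- LHS = (M * R * Mᴴ) i i .re
  have hMQ : ∀ j, (M * Qᴴ) i j = (M * Pᴴ) i j * (g j : ℂ) := by
    intro j
    rw [hQH, ← Matrix.mul_assoc, Matrix.mul_diagonal]
  have hLHS : ∑ j, ‖(M * Pᴴ) i j‖ ^ 2 * (g j) ^ 2 = ((M * R * Mᴴ) i i).re := by
    have e1 : M * R * Mᴴ = (M * Qᴴ) * (M * Qᴴ)ᴴ := by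
      simp only [hR, Matrix.conjTranspose_mul, Matrix.conjTranspose_conjTranspose,
        Matrix.mul_assoc]
    rw [e1, diag_self, Complex.ofReal_re]
    apply Finset.sum_congr rfl
    intro j _
    rw [hMQ j, norm_mul, mul_pow]
    congr 1
    rw [Complex.norm_real, Real.norm_eq_abs, sq_abs]
  rw [hLHS]
  have hlam : ((M * Mᴴ) i i).re = lam i := by
    rw [hM, Matrix.diagonal_apply_eq, Complex.ofReal_re]
  rw [← hlam]
  exact hineq


lemma half {N : ℕ} (hN : 0 < N) (a b : Fin N → ℝ) (t : Matrix (Fin N) (Fin N) ℝ)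
    (ht0 : ∀ i j, 0 ≤ t i j) (hrow : ∀ i, ∑ j, t i j = 1) (hcol : ∀ j, ∑ i, t i j ≤ 1)
    (ε x : ℝ) (hε : 0 < ε)
    (hM : ∑ i, ∑ j, t i j * (a i - b j)^2 < N * ε^3) :
    empCdf a (x - ε) - ε ≤ empCdf b x := by
  classical
  set S : Finset (Fin N) := Finset.univ.filter (fun i => a i < x - ε) with hS
  set Tc : Finset (Fin N) := Finset.univ.filter (fun j => b j < x) with hTc
  -- key sum bound
  have key : ε^2 * ((S.card : ℝ) - Tc.card) < (N : ℝ) * ε^3 := by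
    calc ε^2 * ((S.card : ℝ) - Tc.card)
        ≤ ε^2 * ∑ i ∈ S, ∑ j ∈ Tcᶜ, t i j := by
          apply mul_le_mul_of_nonneg_left _ (sq_nonneg ε)
          have h1 : ∀ i ∈ S, (1 : ℝ) - ∑ j ∈ Tc, t i j ≤ ∑ j ∈ Tcᶜ, t i j := by
            intro i _
            have : ∑ j ∈ Tc, t i j + ∑ j ∈ Tcᶜ, t i j = 1 := by
              rw [Finset.sum_add_sum_compl, hrow]
            linarith
          have hsub : ∀ j, ∑ i ∈ S, t i j ≤ 1 := fun j =>
            le_trans (Finset.sum_le_sum_of_subset_of_nonneg (Finset.subset_univ S)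
              (fun k _ _ => ht0 k j)) (hcol j)
          have h2 : ∑ i ∈ S, ∑ j ∈ Tc, t i j ≤ (Tc.card : ℝ) := by
            rw [show ∑ i ∈ S, ∑ j ∈ Tc, t i j = ∑ j ∈ Tc, ∑ i ∈ S, t i j from Finset.sum_comm]
            calc ∑ j ∈ Tc, ∑ i ∈ S, t i j ≤ ∑ _j ∈ Tc, (1:ℝ) :=
                  Finset.sum_le_sum (fun j _ => hsub j)
              _ = Tc.card := by simp
          have h3 : ∑ i ∈ S, ((1:ℝ) - ∑ j ∈ Tc, t i j)
              = (S.card : ℝ) - ∑ i ∈ S, ∑ j ∈ Tc, t i j := by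
            rw [Finset.sum_sub_distrib]; simp
          calc (S.card : ℝ) - Tc.card
              ≤ ∑ i ∈ S, ((1:ℝ) - ∑ j ∈ Tc, t i j) := by rw [h3]; linarith
            _ ≤ ∑ i ∈ S, ∑ j ∈ Tcᶜ, t i j := Finset.sum_le_sum h1
      _ = ∑ i ∈ S, ∑ j ∈ Tcᶜ, ε^2 * t i j := by rw [Finset.mul_sum]; simp [Finset.mul_sum]
      _ ≤ ∑ i ∈ S, ∑ j ∈ Tcᶜ, t i j * (a i - b j)^2 := by
          apply Finset.sum_le_sum; intro i hi
          apply Finset.sum_le_sum; intro j hj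
          have hai : a i < x - ε := (Finset.mem_filter.mp hi).2
          have hbj : x ≤ b j := by
            have := Finset.mem_compl.mp hj
            simp only [hTc, Finset.mem_filter, Finset.mem_univ, true_and, not_lt] at this
            exact this
          have h2 : ε < b j - a i := by linarith
          have h3 : ε^2 ≤ (a i - b j)^2 := by nlinarith
          nlinarith [ht0 i j]
      _ ≤ ∑ i ∈ S, ∑ j, t i j * (a i - b j)^2 :=
          Finset.sum_le_sum (fun i _ => Finset.sum_le_sum_of_subset_of_nonneg
            (Finset.subset_univ _) (fun j _ _ => mul_nonneg (ht0 _ _) (sq_nonneg _)))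
      _ ≤ ∑ i, ∑ j, t i j * (a i - b j)^2 :=
          Finset.sum_le_sum_of_subset_of_nonneg (Finset.subset_univ _)
            (fun i _ _ => Finset.sum_nonneg (fun j _ => mul_nonneg (ht0 _ _) (sq_nonneg _)))
      _ < (N:ℝ) * ε^3 := hM
  -- conclude
  have hNpos : (0:ℝ) < N := by exact_mod_cast hN
  have h4 : (S.card : ℝ) - Tc.card ≤ ε * N := by nlinarith
  have hcard : empCdf a (x - ε) = (S.card : ℝ) / N := rfl
  have hcard2 : empCdf b x = (Tc.card : ℝ) / N := rfl
  rw [hcard, hcard2, div_sub' (ne_of_gt hNpos), div_le_div_iff₀ hNpos hNpos]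
  nlinarith


lemma levy_le {N : ℕ} (hN : 0 < N) (a b : Fin N → ℝ) (t : Matrix (Fin N) (Fin N) ℝ)
    (ht0 : ∀ i j, 0 ≤ t i j) (hrow : ∀ i, ∑ j, t i j = 1) (hcol : ∀ j, ∑ i, t i j = 1) :
    levyDist (empCdf a) (empCdf b) ^ 3 ≤ (1 / N) * ∑ i, ∑ j, t i j * (a i - b j)^2 := by
  classical
  set M : ℝ := ∑ i, ∑ j, t i j * (a i - b j)^2 with hMdef
  have hMnn : 0 ≤ M :=
    Finset.sum_nonneg fun i _ => Finset.sum_nonneg fun j _ =>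
      mul_nonneg (ht0 i j) (sq_nonneg _)
  have hNpos : (0:ℝ) < N := by exact_mod_cast hN
  set c : ℝ := (M / N) ^ ((1:ℝ)/3) with hcdef
  have hcnn : 0 ≤ c := Real.rpow_nonneg (by positivity) _
  have hc3 : c ^ 3 = M / N := by
    rw [hcdef, ← Real.rpow_natCast (((M / N)) ^ ((1:ℝ)/3)) 3, ← Real.rpow_mul (by positivity)]
    norm_num
  -- show levyDist ≤ c
  have hlev : levyDist (empCdf a) (empCdf b) ≤ c := by
    have hbdd : BddBelow {ε : ℝ | 0 < ε ∧ ∀ x : ℝ,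
        empCdf a (x - ε) - ε ≤ empCdf b x ∧ empCdf b x ≤ empCdf a (x + ε) + ε} :=
      ⟨0, fun y hy => le_of_lt hy.1⟩
    have hmem : ∀ δ > (0:ℝ), c + δ ∈ {ε : ℝ | 0 < ε ∧ ∀ x : ℝ,
        empCdf a (x - ε) - ε ≤ empCdf b x ∧ empCdf b x ≤ empCdf a (x + ε) + ε} := by
      intro δ hδ
      have hεpos : 0 < c + δ := by linarith
      have hlt : M < (N:ℝ) * (c + δ)^3 := by
        have h1 : c ^ 3 < (c + δ) ^ 3 := by nlinarith [mul_nonneg hcnn hcnn, mul_pos hδ hδ, mul_nonneg (mul_nonneg hcnn hcnn) hcnn]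
        have : M / N < (c + δ)^3 := hc3 ▸ h1
        calc M = N * (M / N) := by field_simp
          _ < N * (c+δ)^3 := by exact (mul_lt_mul_iff_right₀ hNpos).mpr this
      refine ⟨hεpos, fun x => ⟨?_, ?_⟩⟩
      · exact half hN a b t ht0 hrow (fun j => le_of_eq (hcol j)) _ x hεpos hlt
      · have hlt' : ∑ i, ∑ j, (Matrix.transpose t) i j * (b i - a j)^2 < N * (c + δ)^3 := by
          have : ∑ i, ∑ j, (Matrix.transpose t) i j * (b i - a j)^2 = M := by
            rw [hMdef, Finset.sum_comm]
            apply Finset.sum_congr rfl; intro i _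
            apply Finset.sum_congr rfl; intro j _
            rw [Matrix.transpose_apply]; ring_nf
          rwa [this]
        have := half hN b a (Matrix.transpose t) (fun i j => ht0 j i)
          (fun i => hcol i) (fun j => le_of_eq (hrow j)) _ (x + (c+δ)) hεpos hlt'
        simpa using this
    apply le_of_forall_pos_le_add
    intro δ hδ
    exact csInf_le hbdd (hmem δ hδ)
  have hlevnn : 0 ≤ levyDist (empCdf a) (empCdf b) :=
    Real.sInf_nonneg (fun y hy => le_of_lt hy.1)
  calc levyDist (empCdf a) (empCdf b) ^ 3 ≤ c ^ 3 := by
        exact pow_le_pow_left₀ hlevnn hlev 3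
    _ = (1/N) * M := by rw [hc3]; ring


lemma completion {N : ℕ} (hN : 0 < N) (t0 : Matrix (Fin N) (Fin N) ℝ)
    (h0 : ∀ i j, 0 ≤ t0 i j) (hr : ∀ i, ∑ j, t0 i j ≤ 1) (hc : ∀ j, ∑ i, t0 i j ≤ 1) :
    ∃ t : Matrix (Fin N) (Fin N) ℝ,
      (∀ i j, t0 i j ≤ t i j) ∧ (∀ i, ∑ j, t i j = 1) ∧ (∀ j, ∑ i, t i j = 1) := by
  classical
  set s : ℝ := N - ∑ i, ∑ j, t0 i j with hs
  have htot : ∑ i, ∑ j, t0 i j ≤ N := by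
    calc ∑ i, ∑ j, t0 i j ≤ ∑ _i : Fin N, (1:ℝ) := Finset.sum_le_sum fun i _ => hr i
      _ = N := by simp
  have hsnn : 0 ≤ s := by rw [hs]; linarith
  rcases eq_or_lt_of_le hsnn with hs0 | hspos
  · -- s = 0 : t0 already doubly stochastic
    have htote : ∑ i, ∑ j, t0 i j = N := by rw [hs] at hs0; linarith
    have hrow1 : ∀ i, ∑ j, t0 i j = 1 := by
      by_contra hcon
      push_neg at hcon
      obtain ⟨i0, hi0⟩ := hcon
      have : ∑ i, ∑ j, t0 i j < ∑ _i : Fin N, (1:ℝ) :=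
        Finset.sum_lt_sum (fun i _ => hr i) ⟨i0, Finset.mem_univ i0, lt_of_le_of_ne (hr i0) hi0⟩
      rw [htote] at this; simp at this
    have hcol1 : ∀ j, ∑ i, t0 i j = 1 := by
      by_contra hcon
      push_neg at hcon
      obtain ⟨j0, hj0⟩ := hcon
      have h1 : ∑ j, ∑ i, t0 i j = N := by rw [Finset.sum_comm]; exact htote
      have : ∑ j, ∑ i, t0 i j < ∑ _j : Fin N, (1:ℝ) :=
        Finset.sum_lt_sum (fun j _ => hc j) ⟨j0, Finset.mem_univ j0, lt_of_le_of_ne (hc j0) hj0⟩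
      rw [h1] at this; simp at this
    exact ⟨t0, fun i j => le_refl _, hrow1, hcol1⟩
  · -- s > 0
    set t : Matrix (Fin N) (Fin N) ℝ :=
      fun i j => t0 i j + (1 - ∑ k, t0 i k) * (1 - ∑ k, t0 k j) / s with ht
    have hge : ∀ i j, t0 i j ≤ t i j := by
      intro i j
      have h1 : 0 ≤ (1 - ∑ k, t0 i k) * (1 - ∑ k, t0 k j) / s :=
        div_nonneg (mul_nonneg (by linarith [hr i]) (by linarith [hc j])) (le_of_lt hspos)
      rw [ht]; dsimp only; linarith
    have hsumcol : ∑ j, (1 - ∑ k, t0 k j) = s := by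
      rw [Finset.sum_sub_distrib]
      simp only [Finset.sum_const, Finset.card_univ, Fintype.card_fin, nsmul_eq_mul, mul_one]
      rw [hs, Finset.sum_comm]
    have hsumrow : ∑ i, (1 - ∑ k, t0 i k) = s := by
      rw [Finset.sum_sub_distrib]
      simp only [Finset.sum_const, Finset.card_univ, Fintype.card_fin, nsmul_eq_mul, mul_one]
      rw [hs]
    refine ⟨t, hge, ?_, ?_⟩
    · intro i
      rw [ht]; dsimp only
      rw [Finset.sum_add_distrib]
      have : ∑ j, (1 - ∑ k, t0 i k) * (1 - ∑ k, t0 k j) / s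
          = (1 - ∑ k, t0 i k) / s * ∑ j, (1 - ∑ k, t0 k j) := by
        rw [Finset.mul_sum]
        apply Finset.sum_congr rfl; intro j _; ring
      rw [this, hsumcol]
      field_simp
      ring
    · intro j
      rw [ht]; dsimp only
      rw [Finset.sum_add_distrib]
      have : ∑ i, (1 - ∑ k, t0 i k) * (1 - ∑ k, t0 k j) / s
          = (1 - ∑ k, t0 k j) / s * ∑ i, (1 - ∑ k, t0 i k) := by
        rw [Finset.mul_sum]
        apply Finset.sum_congr rfl; intro i _; ring
      rw [this, hsumrow]
      field_simp
      ring


-- the reduction M := Uᴴ A with M Mᴴ diagonal and A = U M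
lemma reduce {N : ℕ} (A : Matrix (Fin N) (Fin N) ℂ) :
    ∃ (Um M : Matrix (Fin N) (Fin N) ℂ),
      Um * Umᴴ = 1 ∧ Umᴴ * Um = 1 ∧ A = Um * M ∧
      M * Mᴴ = Matrix.diagonal (fun i =>
        (((Matrix.isHermitian_mul_conjTranspose_self A).eigenvalues i : ℝ) : ℂ)) := by
  have hA := Matrix.isHermitian_mul_conjTranspose_self A
  set Um : Matrix (Fin N) (Fin N) ℂ := (hA.eigenvectorUnitary : Matrix (Fin N) (Fin N) ℂ)
    with hUm
  have h1 : Um * Umᴴ = 1 := by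
    rw [← Matrix.star_eq_conjTranspose]
    exact Matrix.mem_unitaryGroup_iff.mp hA.eigenvectorUnitary.2
  have h2 : Umᴴ * Um = 1 := by
    rw [← Matrix.star_eq_conjTranspose]
    exact Matrix.mem_unitaryGroup_iff'.mp hA.eigenvectorUnitary.2
  refine ⟨Um, Umᴴ * A, h1, h2, ?_, ?_⟩
  · rw [← Matrix.mul_assoc, h1, Matrix.one_mul]
  · have hspec : A * Aᴴ = Um * Matrix.diagonal (RCLike.ofReal ∘ hA.eigenvalues) * Umᴴ := by
      exact hA.spectral_theorem
    have key : Umᴴ * A * (Aᴴ * Um) = Umᴴ * (A * Aᴴ) * Um := by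
      simp only [Matrix.mul_assoc]
    rw [Matrix.conjTranspose_mul, Matrix.conjTranspose_conjTranspose, key]
    conv_lhs => rw [hspec]
    calc Umᴴ * (Um * Matrix.diagonal (RCLike.ofReal ∘ hA.eigenvalues) * Umᴴ) * Um
        = (Umᴴ * Um) * Matrix.diagonal (RCLike.ofReal ∘ hA.eigenvalues) * (Umᴴ * Um) := by
          simp only [Matrix.mul_assoc]
      _ = Matrix.diagonal (RCLike.ofReal ∘ hA.eigenvalues) := by
          rw [h2, Matrix.one_mul, Matrix.mul_one]
      _ = Matrix.diagonal (fun i =>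
            (((Matrix.isHermitian_mul_conjTranspose_self A).eigenvalues i : ℝ) : ℂ)) := rfl


-- row norms: lam and row-zero facts
lemma row_facts {N : ℕ} (M : Matrix (Fin N) (Fin N) ℂ) (lam : Fin N → ℝ)
    (hM : M * Mᴴ = Matrix.diagonal (fun i => (lam i : ℂ))) :
    (∀ i, lam i = ∑ k, ‖M i k‖^2) ∧ (∀ i, 0 ≤ lam i) ∧
      (∀ i, lam i = 0 → ∀ k, M i k = 0) := by
  have h1 : ∀ i, lam i = ∑ k, ‖M i k‖^2 := by
    intro i
    have := congrFun (congrFun hM i) i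
    rw [diag_self, Matrix.diagonal_apply_eq] at this
    exact_mod_cast this.symm
  refine ⟨h1, fun i => (h1 i) ▸ Finset.sum_nonneg fun k _ => sq_nonneg _, ?_⟩
  intro i hi k
  have h : ∑ k, ‖M i k‖^2 = 0 := by rw [← h1 i]; exact hi
  have := (Finset.sum_eq_zero_iff_of_nonneg (fun k _ => sq_nonneg ‖M i k‖)).mp h k
    (Finset.mem_univ k)
  simpa [pow_eq_zero_iff] using this


end LHW

open LHW

/-- Hoffman–Wielandt-type bound: for complex `N × N` matrices `A` and `B`, the cube of the Lévy
distance between the empirical distributions of the singular values of `A` and of `B` is at most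
`(1/N) ‖A − B‖²_{HS}`. -/
theorem levy_dist_singular_values_cubed_le
    (N : ℕ) (hN : 0 < N) (A B : Matrix (Fin N) (Fin N) ℂ) :
    (levyDist (empCdf (singVals A)) (empCdf (singVals B))) ^ 3
      ≤ (1 / (N : ℝ)) * ∑ i, ∑ j, ‖A i j - B i j‖ ^ 2 := by
  classical
  obtain ⟨Um, M, hU1, hU2, hAUM, hMM⟩ := reduce A
  obtain ⟨Vm, P, hV1, hV2, hBVP, hPP⟩ := reduce B
  set lam : Fin N → ℝ := (Matrix.isHermitian_mul_conjTranspose_self A).eigenvalues with hlam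
  set mu : Fin N → ℝ := (Matrix.isHermitian_mul_conjTranspose_self B).eigenvalues with hmu
  obtain ⟨hlamsum, hlamnn, hlamz⟩ := row_facts M lam hMM
  obtain ⟨hmusum, hmunn, hmuz⟩ := row_facts P mu hPP
  set σ : Fin N → ℝ := fun i => Real.sqrt (lam i) with hσ
  set τ : Fin N → ℝ := fun j => Real.sqrt (mu j) with hτ
  set G : Matrix (Fin N) (Fin N) ℂ := M * Pᴴ with hG
  set W : Matrix (Fin N) (Fin N) ℂ := Vmᴴ * Um with hW
  have hWW : Wᴴ * W = 1 := by
    rw [hW, Matrix.conjTranspose_mul, Matrix.conjTranspose_conjTranspose,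
      Matrix.mul_assoc, ← Matrix.mul_assoc Vm, hV1, Matrix.one_mul, hU2]
  have hWW' : W * Wᴴ = 1 := by
    rw [hW, Matrix.conjTranspose_mul, Matrix.conjTranspose_conjTranspose,
      Matrix.mul_assoc, ← Matrix.mul_assoc Um, hU1, Matrix.one_mul, hV2]
  -- column/row sums of ‖W j i‖²
  have hWcol : ∀ i, ∑ j, ‖W j i‖^2 = 1 := by
    intro i
    have h := congrFun (congrFun hWW i) i
    rw [Matrix.one_apply_eq] at h
    have e : (Wᴴ * (Wᴴ)ᴴ) i i = ((∑ j, ‖W j i‖^2 : ℝ) : ℂ) := by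
      rw [diag_self]
      norm_cast
      exact Finset.sum_congr rfl fun j _ => by
        rw [Matrix.conjTranspose_apply, norm_star]
    rw [Matrix.conjTranspose_conjTranspose] at e
    rw [e] at h
    exact_mod_cast h
  have hWrow : ∀ j, ∑ i, ‖W j i‖^2 = 1 := by
    intro j
    have h := congrFun (congrFun hWW' j) j
    rw [Matrix.one_apply_eq, diag_self] at h
    exact_mod_cast h
  -- r and t0
  set r : Fin N → Fin N → ℝ := fun i j => ‖G i j‖ * gfun lam i * gfun mu j with hr
  set t0 : Matrix (Fin N) (Fin N) ℝ := fun i j => (r i j ^ 2 + ‖W j i‖^2) / 2 with ht0def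
  have ht0nn : ∀ i j, 0 ≤ t0 i j := fun i j => by
    rw [ht0def]; positivity
  -- row sums of r²
  have hrrow : ∀ i, ∑ j, r i j ^ 2 ≤ 1 := by
    intro i
    have h1 : ∑ j, r i j ^ 2 = (gfun lam i)^2 * ∑ j, ‖G i j‖^2 * (gfun mu j)^2 := by
      rw [Finset.mul_sum]
      exact Finset.sum_congr rfl fun j _ => by rw [hr]; ring
    rw [h1]
    calc (gfun lam i)^2 * ∑ j, ‖G i j‖^2 * (gfun mu j)^2
        ≤ (gfun lam i)^2 * lam i := by
          apply mul_le_mul_of_nonneg_left _ (sq_nonneg _)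
          exact bessel M P lam mu hMM hPP i
      _ ≤ 1 := by
          unfold gfun
          by_cases hi : lam i = 0
          · rw [if_pos hi, hi]; norm_num
          · rw [if_neg hi]
            rw [show ((Real.sqrt (lam i))⁻¹)^2 * lam i = (lam i / (Real.sqrt (lam i))^2) by ring]
            rw [Real.sq_sqrt (hlamnn i), div_self hi]
  have hrcol : ∀ j, ∑ i, r i j ^ 2 ≤ 1 := by
    intro j
    have h1 : ∑ i, r i j ^ 2 = (gfun mu j)^2 * ∑ i, ‖(P * Mᴴ) j i‖^2 * (gfun lam i)^2 := by
      rw [Finset.mul_sum]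
      refine Finset.sum_congr rfl fun i _ => ?_
      have : ‖(P * Mᴴ) j i‖ = ‖G i j‖ := by
        rw [hG, show (P * Mᴴ) = (M * Pᴴ)ᴴ by rw [Matrix.conjTranspose_mul, Matrix.conjTranspose_conjTranspose]]
        rw [Matrix.conjTranspose_apply, norm_star]
      rw [this, hr]; ring
    rw [h1]
    calc (gfun mu j)^2 * ∑ i, ‖(P * Mᴴ) j i‖^2 * (gfun lam i)^2
        ≤ (gfun mu j)^2 * mu j := by
          apply mul_le_mul_of_nonneg_left _ (sq_nonneg _)
          exact bessel P M mu lam hPP hMM j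
      _ ≤ 1 := by
          unfold gfun
          by_cases hj : mu j = 0
          · rw [if_pos hj, hj]; norm_num
          · rw [if_neg hj]
            rw [show ((Real.sqrt (mu j))⁻¹)^2 * mu j = (mu j / (Real.sqrt (mu j))^2) by ring]
            rw [Real.sq_sqrt (hmunn j), div_self hj]
  -- t0 row and col sums ≤ 1
  have ht0row : ∀ i, ∑ j, t0 i j ≤ 1 := by
    intro i
    rw [ht0def]
    simp only
    rw [show (∑ j, (r i j ^ 2 + ‖W j i‖^2)/2) = ((∑ j, r i j ^2) + ∑ j, ‖W j i‖^2)/2 by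
      rw [← Finset.sum_add_distrib, ← Finset.sum_div]]
    rw [hWcol i]
    linarith [hrrow i]
  have ht0col : ∀ j, ∑ i, t0 i j ≤ 1 := by
    intro j
    rw [ht0def]
    simp only
    rw [show (∑ i, (r i j ^ 2 + ‖W j i‖^2)/2) = ((∑ i, r i j ^2) + ∑ i, ‖W j i‖^2)/2 by
      rw [← Finset.sum_add_distrib, ← Finset.sum_div]]
    rw [hWrow j]
    linarith [hrcol j]
  -- norm of G entries
  have hGnorm : ∀ i j, ‖G i j‖ = σ i * τ j * r i j := by
    intro i j
    by_cases hi : lam i = 0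
    · have : G i j = 0 := by
        rw [hG, Matrix.mul_apply]
        apply Finset.sum_eq_zero
        intro k _
        rw [hlamz i hi k, zero_mul]
      simp [hr, this]
    · by_cases hj : mu j = 0
      · have : G i j = 0 := by
          rw [hG, Matrix.mul_apply]
          apply Finset.sum_eq_zero
          intro k _
          rw [Matrix.conjTranspose_apply, hmuz j hj k, star_zero, mul_zero]
        simp [hr, this]
      · rw [hr, hσ, hτ]
        simp only
        unfold gfun
        rw [if_neg hi, if_neg hj]
        have h1 : Real.sqrt (lam i) ≠ 0 := by
          rw [Real.sqrt_ne_zero']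
          exact lt_of_le_of_ne (hlamnn i) (Ne.symm hi)
        have h2 : Real.sqrt (mu j) ≠ 0 := by
          rw [Real.sqrt_ne_zero']
          exact lt_of_le_of_ne (hmunn j) (Ne.symm hj)
        field_simp
  have hrnn : ∀ i j, 0 ≤ r i j := fun i j => by
    rw [hr]
    exact mul_nonneg (mul_nonneg (norm_nonneg _) (gfun_nonneg lam i)) (gfun_nonneg mu j)
  have hσnn : ∀ i, 0 ≤ σ i := fun i => Real.sqrt_nonneg _
  have hτnn : ∀ j, 0 ≤ τ j := fun j => Real.sqrt_nonneg _
  -- trace identity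
  have htr1 : Matrix.trace (A * Bᴴ) = Matrix.trace (G * W) := by
    rw [hAUM, hBVP, Matrix.conjTranspose_mul]
    rw [show Um * M * (Pᴴ * Vmᴴ) = Um * (M * Pᴴ * Vmᴴ) by simp only [Matrix.mul_assoc]]
    rw [Matrix.trace_mul_comm, hG, hW]
    simp only [Matrix.mul_assoc]
  -- trace bound
  have htrace : (Matrix.trace (A * Bᴴ)).re ≤ ∑ i, ∑ j, t0 i j * (σ i * τ j) := by
    rw [htr1]
    have e2 : Matrix.trace (G * W) = ∑ i, ∑ j, G i j * W j i := by
      simp only [Matrix.trace, Matrix.diag, Matrix.mul_apply]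
    rw [e2]
    rw [Complex.re_sum]
    refine le_trans (Finset.sum_le_sum fun i _ => ?_) (le_refl _)
    rw [Complex.re_sum]
    refine Finset.sum_le_sum fun j _ => ?_
    calc (G i j * W j i).re ≤ ‖G i j * W j i‖ := Complex.re_le_norm _ |>.trans (le_of_eq rfl)
      _ = ‖G i j‖ * ‖W j i‖ := norm_mul _ _
      _ = (σ i * τ j) * (r i j * ‖W j i‖) := by rw [hGnorm i j]; ring
      _ ≤ (σ i * τ j) * t0 i j := by
          apply mul_le_mul_of_nonneg_left _ (mul_nonneg (hσnn i) (hτnn j))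
          rw [ht0def]
          have := sq_nonneg (r i j - ‖W j i‖)
          have h2 := hrnn i j
          have h3 : (0:ℝ) ≤ ‖W j i‖ := norm_nonneg _
          nlinarith
      _ = t0 i j * (σ i * τ j) := by ring
  -- sum of lam equals HS norm of A
  have hAsum : ∑ i, lam i = ∑ i, ∑ j, ‖A i j‖^2 := by
    have h1 : Matrix.trace (M * Mᴴ) = ((∑ i, lam i : ℝ) : ℂ) := by
      rw [hMM]
      rw [Matrix.trace_diagonal]
      push_cast
      rfl
    have h2 : Matrix.trace (A * Aᴴ) = Matrix.trace (M * Mᴴ) := by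
      rw [hAUM, Matrix.conjTranspose_mul]
      rw [show Um * M * (Mᴴ * Umᴴ) = Um * (M * Mᴴ * Umᴴ) by simp only [Matrix.mul_assoc]]
      rw [Matrix.trace_mul_comm]
      rw [show M * Mᴴ * Umᴴ * Um = M * Mᴴ * (Umᴴ * Um) by simp only [Matrix.mul_assoc]]
      rw [hU2, Matrix.mul_one]
    have h3 : Matrix.trace (A * Aᴴ) = ((∑ i, ∑ j, ‖A i j‖^2 : ℝ) : ℂ) := by
      rw [show Matrix.trace (A * Aᴴ) = ∑ i, (A * Aᴴ) i i from rfl]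
      rw [Complex.ofReal_sum]
      exact Finset.sum_congr rfl fun i _ => diag_self A i
    have h4 : ((∑ i, lam i : ℝ) : ℂ) = ((∑ i, ∑ j, ‖A i j‖^2 : ℝ) : ℂ) := by
      rw [← h1, ← h2, h3]
    exact_mod_cast h4
  -- same for B
  have hBsum : ∑ j, mu j = ∑ i, ∑ j, ‖B i j‖^2 := by
    have h1 : Matrix.trace (P * Pᴴ) = ((∑ j, mu j : ℝ) : ℂ) := by
      rw [hPP, Matrix.trace_diagonal]
      push_cast
      rfl
    have h2 : Matrix.trace (B * Bᴴ) = Matrix.trace (P * Pᴴ) := by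
      rw [hBVP, Matrix.conjTranspose_mul]
      rw [show Vm * P * (Pᴴ * Vmᴴ) = Vm * (P * Pᴴ * Vmᴴ) by simp only [Matrix.mul_assoc]]
      rw [Matrix.trace_mul_comm]
      rw [show P * Pᴴ * Vmᴴ * Vm = P * Pᴴ * (Vmᴴ * Vm) by simp only [Matrix.mul_assoc]]
      rw [hV2, Matrix.mul_one]
    have h3 : Matrix.trace (B * Bᴴ) = ((∑ i, ∑ j, ‖B i j‖^2 : ℝ) : ℂ) := by
      rw [show Matrix.trace (B * Bᴴ) = ∑ i, (B * Bᴴ) i i from rfl]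
      rw [Complex.ofReal_sum]
      exact Finset.sum_congr rfl fun i _ => diag_self B i
    have h4 : ((∑ j, mu j : ℝ) : ℂ) = ((∑ i, ∑ j, ‖B i j‖^2 : ℝ) : ℂ) := by
      rw [← h1, ← h2, h3]
    exact_mod_cast h4
  -- expansion of the HS norm of the difference
  have hpt : ∀ a b : ℂ, ‖a - b‖^2 = ‖a‖^2 + ‖b‖^2 - 2*(a * star b).re := by
    intro a b
    have h1 := congrArg Complex.re (mul_star_self (a - b))
    rw [Complex.ofReal_re] at h1
    have h3 : (b * star a).re = (a * star b).re := by
      rw [show b * star a = star (a * star b) by rw [StarMul.star_mul, star_star]]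
      exact Complex.conj_re _
    have h4 : (a * star a).re = ‖a‖^2 := by rw [mul_star_self]; exact Complex.ofReal_re _
    have h5 : (b * star b).re = ‖b‖^2 := by rw [mul_star_self]; exact Complex.ofReal_re _
    have h2 : ((a - b) * star (a - b)).re
        = (a * star a).re + (b * star b).re - ((a * star b).re + (b * star a).re) := by
      rw [star_sub, mul_sub, sub_mul, sub_mul]
      simp only [Complex.sub_re, Complex.add_re]
      ring
    rw [h2, h3, h4, h5] at h1
    linarith
  have htrAB : (Matrix.trace (A * Bᴴ)).re = ∑ i, ∑ j, (A i j * star (B i j)).re := by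
    rw [show Matrix.trace (A * Bᴴ) = ∑ i, ∑ j, A i j * star (B i j) by
      simp only [Matrix.trace, Matrix.diag, Matrix.mul_apply, Matrix.conjTranspose_apply]]
    rw [Complex.re_sum]
    exact Finset.sum_congr rfl fun i _ => Complex.re_sum _ _
  have hexp : ∑ i, ∑ j, ‖A i j - B i j‖^2
      = (∑ i, ∑ j, ‖A i j‖^2) + (∑ i, ∑ j, ‖B i j‖^2) - 2 * (Matrix.trace (A * Bᴴ)).re := by
    rw [htrAB]
    rw [show (∑ i, ∑ j, ‖A i j‖^2) + (∑ i, ∑ j, ‖B i j‖^2)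
        - 2 * ∑ i, ∑ j, (A i j * star (B i j)).re
        = ∑ i, ((∑ j, ‖A i j‖^2) + (∑ j, ‖B i j‖^2) - 2 * ∑ j, (A i j * star (B i j)).re) by
      rw [Finset.sum_sub_distrib, Finset.sum_add_distrib, Finset.mul_sum]]
    refine Finset.sum_congr rfl fun i _ => ?_
    rw [show (∑ j, ‖A i j‖^2) + (∑ j, ‖B i j‖^2) - 2 * ∑ j, (A i j * star (B i j)).re
        = ∑ j, (‖A i j‖^2 + ‖B i j‖^2 - 2 * (A i j * star (B i j)).re) by
      rw [Finset.sum_sub_distrib, Finset.sum_add_distrib, Finset.mul_sum]]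
    exact Finset.sum_congr rfl fun j _ => hpt (A i j) (B i j)
  -- complete t0 to a doubly stochastic matrix
  obtain ⟨t, htge, htrow, htcol⟩ := completion hN t0 ht0nn ht0row ht0col
  have htnn : ∀ i j, 0 ≤ t i j := fun i j => le_trans (ht0nn i j) (htge i j)
  -- energy bound
  have hsig2 : ∀ i, σ i ^ 2 = lam i := fun i => Real.sq_sqrt (hlamnn i)
  have htau2 : ∀ j, τ j ^ 2 = mu j := fun j => Real.sq_sqrt (hmunn j)
  have henergy : ∑ i, ∑ j, t i j * (σ i - τ j)^2 ≤ ∑ i, ∑ j, ‖A i j - B i j‖^2 := by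
    have split : ∑ i, ∑ j, t i j * (σ i - τ j)^2
        = (∑ i, ∑ j, t i j * σ i^2) + (∑ i, ∑ j, t i j * τ j^2)
          - 2 * ∑ i, ∑ j, t i j * (σ i * τ j) := by
      calc ∑ i, ∑ j, t i j * (σ i - τ j)^2
          = ∑ i, ∑ j, (t i j * σ i^2 + t i j * τ j^2 - 2*(t i j * (σ i * τ j))) :=
            Finset.sum_congr rfl fun i _ => Finset.sum_congr rfl fun j _ => by ring
        _ = ∑ i, ((∑ j, t i j * σ i^2) + (∑ j, t i j * τ j^2)
              - 2 * ∑ j, t i j * (σ i * τ j)) := by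
            refine Finset.sum_congr rfl fun i _ => ?_
            rw [Finset.sum_sub_distrib, Finset.sum_add_distrib, Finset.mul_sum]
        _ = _ := by
            rw [Finset.sum_sub_distrib, Finset.sum_add_distrib, Finset.mul_sum]
    have hs1 : ∑ i, ∑ j, t i j * σ i^2 = ∑ i, lam i := by
      refine Finset.sum_congr rfl fun i _ => ?_
      rw [← Finset.sum_mul, htrow i, one_mul, hsig2 i]
    have hs2 : ∑ i, ∑ j, t i j * τ j^2 = ∑ j, mu j := by
      rw [Finset.sum_comm]
      refine Finset.sum_congr rfl fun j _ => ?_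
      rw [← Finset.sum_mul, htcol j, one_mul, htau2 j]
    have hmid : ∑ i, ∑ j, t0 i j * (σ i * τ j) ≤ ∑ i, ∑ j, t i j * (σ i * τ j) :=
      Finset.sum_le_sum fun i _ => Finset.sum_le_sum fun j _ =>
        mul_le_mul_of_nonneg_right (htge i j) (mul_nonneg (hσnn i) (hτnn j))
    rw [split, hs1, hs2, hexp, ← hAsum, ← hBsum]
    linarith
  -- conclude via the counting lemma
  have hfin := levy_le hN (singVals A) (singVals B) t htnn htrow htcol
  have hee : singVals A = σ := rfl
  have hee2 : singVals B = τ := rfl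
  rw [hee, hee2] at hfin
  have hNinv : (0:ℝ) ≤ 1 / N := by positivity
  calc (levyDist (empCdf (singVals A)) (empCdf (singVals B))) ^ 3
      ≤ (1 / (N:ℝ)) * ∑ i, ∑ j, t i j * (σ i - τ j)^2 := by rw [hee, hee2]; exact hfin
    _ ≤ (1 / (N:ℝ)) * ∑ i, ∑ j, ‖A i j - B i j‖^2 :=
        mul_le_mul_of_nonneg_left henergy hNinv
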